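/- Under Hypothesis (H), the k(x)-linear map sending a pair (A, a) of polynomials in k(x)[y] with deg_y(A) < d_y^- and deg_y(a) < d_y* to the polynomial Q*·D_y(A) − (Q*·D_y(Q^-)/Q^-)·A + Q^-·a (of degree less than d_y in y) is bijective. Equivalently, for every P in k(x)[y] with deg_y(P) < d_y there is a unique pair (A, a) with deg_y(A) < d_y^- and deg_y(a) < d_y* such that P/Q = D_y(A/Q^-) + a/Q*. -/

import Mathlib

open Polynomial

noncomputable section

/-- A map is a derivation: it is additive and satisfies the Leibniz rule. -/
def IsDeriv {F : Type*} [CommRing F] (D : F → F) : Prop :=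
  (∀ a b, D (a + b) = D a + D b) ∧ ∀ a b, D (a * b) = a * D b + b * D a

/-- Degree in `x` of an element of `k[x][y]` (inner variable `x`, outer variable `y`). -/
def degX {k : Type*} [Field k] (Q : Polynomial (Polynomial k)) : ℕ :=
  Q.support.sup fun i => (Q.coeff i).natDegree

/-- Partial derivative with respect to `x` on `k[x][y]`. -/
def derivX {k : Type*} [Field k] (Q : Polynomial (Polynomial k)) : Polynomial (Polynomial k) :=
  Q.sum fun i a => Polynomial.C (Polynomial.derivative a) * Polynomial.X ^ i

/-- The embedding `k[x][y] → k(x)(y)`. -/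
def toF {k : Type*} [Field k] : Polynomial (Polynomial k) →+* RatFunc (RatFunc k) :=
  (algebraMap (Polynomial (RatFunc k)) (RatFunc (RatFunc k))).comp
    (Polynomial.mapRingHom (algebraMap (Polynomial k) (RatFunc k)))

/-- The embedding `k(x) → k(x)(y)`. -/
def ratToF {k : Type*} [Field k] : RatFunc k →+* RatFunc (RatFunc k) :=
  (algebraMap (Polynomial (RatFunc k)) (RatFunc (RatFunc k))).comp
    (Polynomial.C : RatFunc k →+* Polynomial (RatFunc k))

/-- The embedding `k(x)[y] → k(x)(y)`. -/
def kyToF {k : Type*} [Field k] : Polynomial (RatFunc k) →+* RatFunc (RatFunc k) :=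
  algebraMap (Polynomial (RatFunc k)) (RatFunc (RatFunc k))

/-- The embedding `k[x][y] → k(x)[y]`. -/
def toKy {k : Type*} [Field k] : Polynomial (Polynomial k) →+* Polynomial (RatFunc k) :=
  Polynomial.mapRingHom (algebraMap (Polynomial k) (RatFunc k))

/-- The embedding `k[y] → k[x][y]` (a polynomial in `y` viewed in `k[x][y]`). -/
def yToXY {k : Type*} [Field k] : Polynomial k →+* Polynomial (Polynomial k) :=
  Polynomial.mapRingHom (Polynomial.C : k →+* Polynomial k)

/-- The Hermite matrix associated with a factorisation `Q = Qs * Qneg`, with respect to the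
monomial bases: its columns are the coefficient vectors (in `y`, coefficients in `k[x]`) of
`Qs * D_y(y^j) - E * y^j` for `j < dm` (where `E = Qs * D_y(Qneg) / Qneg`) and of
`Qneg * y^j` for `j < dy - dm`. -/
def hermiteMat {k : Type*} [Field k] (Qs Qneg E : Polynomial (Polynomial k)) (dy dm : ℕ) :
    Matrix (Fin dy) (Fin dy) (Polynomial k) :=
  Matrix.of fun i j =>
    if (j : ℕ) < dm then
      (Qs * Polynomial.derivative (Polynomial.X ^ (j : ℕ)) - E * Polynomial.X ^ (j : ℕ)).coeff i
    else
      (Qneg * Polynomial.X ^ ((j : ℕ) - dm)).coeff i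


section Aux
variable {K : Type*} [Field K] [CharZero K]


lemma prime_one_le_natDegree {p : K[X]} (hp : Prime p) : 1 ≤ p.natDegree := by
  by_contra h
  push_neg at h
  have h0 : p.natDegree = 0 := by omega
  exact hp.not_unit (isUnit_iff_degree_eq_zero.mpr (by rw [degree_eq_natDegree hp.ne_zero, h0]; rfl))

lemma pow_extract (p : K[X]) (hp : Prime p) :
    ∀ B : K[X], B ≠ 0 → ∃ n u, B = p ^ n * u ∧ ¬ p ∣ u := by
  have hd : 1 ≤ p.natDegree := prime_one_le_natDegree hp
  suffices H : ∀ n : ℕ, ∀ B : K[X], B.natDegree = n → B ≠ 0 → ∃ n u, B = p ^ n * u ∧ ¬ p ∣ u by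
    intro B hB0; exact H B.natDegree B rfl hB0
  intro n
  induction n using Nat.strong_induction_on with
  | _ n ih =>
    intro B hB hB0
    by_cases h : p ∣ B
    · obtain ⟨B₁, rfl⟩ := h
      have hB₁ : B₁ ≠ 0 := right_ne_zero_of_mul hB0
      have hlt : B₁.natDegree < n := by
        subst hB
        rw [natDegree_mul hp.ne_zero hB₁]
        omega
      obtain ⟨m, u, hmu, hu⟩ := ih _ hlt B₁ rfl hB₁
      exact ⟨m + 1, u, by rw [hmu]; ring, hu⟩
    · exact ⟨0, B, by ring, h⟩

lemma not_dvd_deriv (p : K[X]) (hp : Prime p) : ¬ p ∣ derivative p := by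
  intro h
  have h1 : 1 ≤ p.natDegree := prime_one_le_natDegree hp
  have hne : derivative p ≠ 0 := by
    intro h0
    have := natDegree_eq_zero_of_derivative_eq_zero h0
    omega
  exact absurd (Polynomial.degree_le_of_dvd h hne) (not_le.mpr (degree_derivative_lt hp.ne_zero))

lemma deriv_combo (p u v : K[X]) (μ ν : ℕ) (hν : 1 ≤ ν) :
    derivative (p ^ μ * u) * (p ^ ν * v) - (p ^ μ * u) * derivative (p ^ ν * v)
      = p ^ (μ + ν - 1) * (C ((μ : K) - (ν : K)) * derivative p * u * v
          + p * (derivative u * v - u * derivative v)) := by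
  obtain ⟨ν', rfl⟩ : ∃ ν', ν = ν' + 1 := ⟨ν - 1, by omega⟩
  cases μ with
  | zero =>
    simp only [pow_zero, one_mul, derivative_mul, derivative_pow, Nat.add_sub_cancel,
      Nat.cast_zero, Nat.cast_add, Nat.cast_one, map_sub, map_add, map_one, map_zero,
      Nat.zero_add, Nat.add_sub_cancel_left]
    push_cast
    ring
  | succ μ' =>
    simp only [derivative_mul, derivative_pow, Nat.add_sub_cancel,
      Nat.cast_add, Nat.cast_one, map_sub, map_add, map_one]
    have he : μ' + 1 + (ν' + 1) - 1 = μ' + ν' + 1 := by omega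
    rw [he]
    push_cast
    ring

set_option maxHeartbeats 1000000 in
lemma inj_core (S N E A a : K[X]) (hS : S ≠ 0) (hN : N ≠ 0)
    (hEN : E * N = S * derivative N)
    (hdvd : ∀ p : K[X], Prime p → p ∣ N → p ∣ S)
    (hsq : ∀ p : K[X], Prime p → ¬ (p * p ∣ S))
    (hA : A.degree < N.degree)
    (heq : S * derivative A - E * A + N * a = 0) : A = 0 ∧ a = 0 := by
  classical
  have key : S * (derivative A * N - A * derivative N) = -(N ^ 2 * a) := by
    linear_combination N * heq + A * hEN
  by_cases hA0 : A = 0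
  · refine ⟨hA0, ?_⟩
    rw [hA0] at heq
    simp only [derivative_zero, mul_zero, sub_zero, zero_add] at heq
    rcases mul_eq_zero.mp heq with h | h
    · exact absurd h hN
    · exact h
  exfalso
  have hnd : ¬ N ∣ A := fun h => absurd (Polynomial.degree_le_of_dvd h hA0) (not_le.mpr hA)
  set g := EuclideanDomain.gcd A N with hg
  obtain ⟨N₁, hN₁⟩ : g ∣ N := EuclideanDomain.gcd_dvd_right A N
  have hN₁0 : N₁ ≠ 0 := by rintro rfl; rw [mul_zero] at hN₁; exact hN hN₁
  have hN₁u : ¬ IsUnit N₁ := fun hu =>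
    hnd (hN₁ ▸ (hu.mul_right_dvd.mpr (EuclideanDomain.gcd_dvd_left A N)))
  obtain ⟨p, hpirr, hpN₁⟩ := WfDvdMonoid.exists_irreducible_factor hN₁u hN₁0
  have hp : Prime p := hpirr.prime
  obtain ⟨μ, u, hAdef, hpu⟩ := pow_extract p hp A hA0
  obtain ⟨ν, v, hNdef, hpv⟩ := pow_extract p hp N hN
  have hpN : p ∣ N := hpN₁.trans ⟨g, by rw [hN₁]; ring⟩
  have hν : 1 ≤ ν := by
    rcases Nat.eq_zero_or_pos ν with h0 | h; swap; · exact h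
    rw [h0, pow_zero, one_mul] at hNdef
    exact absurd (hNdef ▸ hpN) hpv
  have hμν : μ < ν := by
    by_contra hle
    push_neg at hle
    have h1 : p ^ ν ∣ A := hAdef ▸ dvd_mul_of_dvd_left (pow_dvd_pow p hle) u
    have h2 : p ^ ν ∣ g := EuclideanDomain.dvd_gcd h1 (hNdef ▸ dvd_mul_right _ _)
    have h3 : p ^ ν * p ∣ p ^ ν * v := by
      rw [← pow_succ, ← hNdef, hN₁]
      exact pow_succ p ν ▸ mul_dvd_mul h2 hpN₁
    exact hpv ((mul_dvd_mul_iff_left (pow_ne_zero ν hp.ne_zero)).mp h3)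
  obtain ⟨t, ht⟩ := hdvd p hp hpN
  have hpt : ¬ p ∣ t := fun h => hsq p hp (by obtain ⟨w, hw⟩ := h; exact ⟨w, by rw [ht, hw]; ring⟩)
  set c : K := (μ : K) - (ν : K) with hc
  have hc0 : c ≠ 0 := by
    rw [hc, sub_ne_zero]
    exact_mod_cast Nat.ne_of_lt hμν
  set G := C c * derivative p * u * v + p * (derivative u * v - u * derivative v) with hG
  obtain ⟨δ, hδ⟩ : ∃ δ, ν = μ + δ + 1 := ⟨ν - μ - 1, by omega⟩
  have hcombo : derivative A * N - A * derivative N = p ^ (2 * μ + δ) * G := by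
    rw [hAdef, hNdef]
    have h1 : μ + ν - 1 = 2 * μ + δ := by omega
    rw [← h1]
    exact deriv_combo p u v μ ν hν
  rw [hcombo, ht, hNdef, hδ] at key
  have hkey2 : p ^ (2 * μ + δ + 1) * (t * G) = p ^ (2 * μ + δ + 1) * (-(p ^ (δ + 1) * v ^ 2 * a)) := by
    linear_combination key
  have hkey3 : t * G = -(p ^ (δ + 1) * v ^ 2 * a) :=
    mul_left_cancel₀ (pow_ne_zero _ hp.ne_zero) hkey2
  have hpdvd : p ∣ t * G := by
    rw [hkey3]
    exact dvd_neg.mpr (dvd_mul_of_dvd_left (dvd_mul_of_dvd_left (dvd_pow_self p (Nat.succ_ne_zero δ)) _) _)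
  rcases hp.dvd_mul.mp hpdvd with h | h
  · exact hpt h
  · rw [hG] at h
    have h2 : p ∣ C c * derivative p * u * v := by
      have h1 : p ∣ p * (derivative u * v - u * derivative v) := Dvd.intro _ rfl
      have := dvd_sub h h1
      simpa using this
    rcases hp.dvd_mul.mp h2 with h3 | h3
    · rcases hp.dvd_mul.mp h3 with h4 | h4
      · rcases hp.dvd_mul.mp h4 with h5 | h5
        · exact hp.not_unit (isUnit_of_dvd_unit h5 (isUnit_C.mpr (isUnit_iff_ne_zero.mpr hc0)))
        · exact not_dvd_deriv p hp h5
      · exact hpu h4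
    · exact hpv h3


lemma degree_mul_lt_nat {B C : K[X]} {b n : ℕ} (hB : B.natDegree ≤ b) (hC : C.degree < (n : ℕ)) :
    (B * C).degree < ((b + n : ℕ) : WithBot ℕ) := by
  by_cases h : B * C = 0
  · rw [h, degree_zero]; exact WithBot.bot_lt_coe _
  have hB0 : B ≠ 0 := fun hh => h (by rw [hh, zero_mul])
  have hC0 : C ≠ 0 := fun hh => h (by rw [hh, mul_zero])
  rw [degree_mul, degree_eq_natDegree hB0, degree_eq_natDegree hC0]
  rw [degree_eq_natDegree hC0] at hC
  have hCn : C.natDegree < n := by exact_mod_cast hC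
  exact_mod_cast (by omega : B.natDegree + C.natDegree < b + n)

/-- The raw linear map `(A, a) ↦ S * A' - E * A + N * a`. -/
noncomputable def Lraw (S E N : K[X]) : K[X] × K[X] →ₗ[K] K[X] :=
  ((LinearMap.mulLeft K S) ∘ₗ (Polynomial.derivative : K[X] →ₗ[K] K[X]) ∘ₗ LinearMap.fst K K[X] K[X])
    - ((LinearMap.mulLeft K E) ∘ₗ LinearMap.fst K K[X] K[X])
    + ((LinearMap.mulLeft K N) ∘ₗ LinearMap.snd K K[X] K[X])

lemma Lraw_apply (S E N A a : K[X]) :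
    Lraw S E N (A, a) = S * derivative A - E * A + N * a := by
  simp [Lraw, LinearMap.mulLeft_apply]

set_option maxHeartbeats 1000000 in
lemma decomp (S N E : K[X]) (hS : S ≠ 0) (hN : N ≠ 0)
    (hEN : E * N = S * derivative N)
    (hdvd : ∀ p : K[X], Prime p → p ∣ N → p ∣ S)
    (hsq : ∀ p : K[X], Prime p → ¬ (p * p ∣ S)) :
    ∀ P' : K[X], P'.degree < ((N.natDegree + S.natDegree : ℕ) : WithBot ℕ) →
      ∃! Aa : K[X] × K[X], Aa.1.degree < (N.natDegree : WithBot ℕ)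
        ∧ Aa.2.degree < (S.natDegree : WithBot ℕ)
        ∧ P' = S * derivative Aa.1 - E * Aa.1 + N * Aa.2 := by
  have hEdeg : E.natDegree ≤ S.natDegree := by
    by_cases hE0 : E = 0
    · simp [hE0]
    have hN' : derivative N ≠ 0 := by
      intro h
      rw [h, mul_zero] at hEN
      exact hE0 ((mul_eq_zero.mp hEN).resolve_right hN)
    have hNd : N.natDegree ≠ 0 := fun h => hN' (by rw [eq_C_of_natDegree_eq_zero h]; simp)
    have h1 : E.natDegree + N.natDegree = S.natDegree + (derivative N).natDegree := by
      rw [← natDegree_mul hE0 hN, ← natDegree_mul hS hN', hEN]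
    have h2 : (derivative N).natDegree < N.natDegree := natDegree_derivative_lt hNd
    omega
  set dn := N.natDegree with hdn
  set ds := S.natDegree with hds
  -- membership of the image in degreeLT (dn + ds)
  have hmem : ∀ z : ↥(degreeLT K dn) × ↥(degreeLT K ds),
      (Lraw S E N) (((degreeLT K dn).subtype.prodMap (degreeLT K ds).subtype) z)
        ∈ degreeLT K (dn + ds) := by
    rintro ⟨⟨A, hA⟩, ⟨a, ha⟩⟩
    rw [mem_degreeLT] at hA ha ⊢
    simp only [LinearMap.prodMap_apply, Submodule.coe_subtype, Lraw_apply]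
    have h1 : (S * derivative A).degree < ((ds + dn : ℕ) : WithBot ℕ) := by
      apply degree_mul_lt_nat le_rfl
      rcases eq_or_ne A 0 with rfl | hA0
      · simp only [derivative_zero, degree_zero]
        exact bot_lt_iff_ne_bot.mpr (by simp)
      · exact lt_trans (degree_derivative_lt hA0) hA
    have h2 : (E * A).degree < ((ds + dn : ℕ) : WithBot ℕ) := degree_mul_lt_nat hEdeg hA
    have h3 : (N * a).degree < ((dn + ds : ℕ) : WithBot ℕ) := degree_mul_lt_nat le_rfl ha
    have hcomm : ((ds + dn : ℕ) : WithBot ℕ) = ((dn + ds : ℕ) : WithBot ℕ) := by rw [Nat.add_comm]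
    calc (S * derivative A - E * A + N * a).degree
        ≤ max (S * derivative A - E * A).degree (N * a).degree := degree_add_le _ _
      _ < _ := by
          apply max_lt _ h3
          exact lt_of_le_of_lt (degree_sub_le _ _) (max_lt (hcomm ▸ h1) (hcomm ▸ h2))
  -- the restricted linear map
  set L : (↥(degreeLT K dn) × ↥(degreeLT K ds)) →ₗ[K] ↥(degreeLT K (dn + ds)) :=
    LinearMap.codRestrict _ ((Lraw S E N).comp
      (((degreeLT K dn).subtype).prodMap ((degreeLT K ds).subtype))) hmem with hL
  haveI : Module.Finite K ↥(degreeLT K dn) := Module.Finite.equiv (degreeLTEquiv K dn).symm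
  haveI : Module.Finite K ↥(degreeLT K ds) := Module.Finite.equiv (degreeLTEquiv K ds).symm
  haveI : Module.Finite K ↥(degreeLT K (dn + ds)) :=
    Module.Finite.equiv (degreeLTEquiv K (dn + ds)).symm
  have hinj : Function.Injective L := by
    rw [← LinearMap.ker_eq_bot (M := ↥(degreeLT K dn) × ↥(degreeLT K ds))]
    rw [LinearMap.ker_eq_bot']
    rintro ⟨⟨A, hA⟩, ⟨a, ha⟩⟩ hz
    have hz' : S * derivative A - E * A + N * a = 0 := by
      have := congrArg (Subtype.val) hz
      simpa [hL, LinearMap.codRestrict_apply, Lraw_apply] using this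
    have hdegA : A.degree < N.degree := by
      rcases eq_or_ne A 0 with rfl | hA0
      · rw [degree_zero]; exact lt_of_lt_of_le (by exact_mod_cast WithBot.bot_lt_coe 0) (zero_le_degree_iff.mpr hN)
      · exact lt_of_lt_of_le (mem_degreeLT.mp hA) (by rw [degree_eq_natDegree hN])
    obtain ⟨h1, h2⟩ := inj_core S N E A a hS hN hEN hdvd hsq hdegA hz'
    ext <;> simp [h1, h2]
  have hrank : Module.finrank K (↥(degreeLT K dn) × ↥(degreeLT K ds))
      = Module.finrank K ↥(degreeLT K (dn + ds)) := by
    rw [Module.finrank_prod]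
    rw [(degreeLTEquiv K dn).finrank_eq, (degreeLTEquiv K ds).finrank_eq,
      (degreeLTEquiv K (dn + ds)).finrank_eq]
    simp [Module.finrank_fin_fun]
  have hsurj : Function.Surjective L :=
    (LinearMap.injective_iff_surjective_of_finrank_eq_finrank hrank).mp hinj
  intro P' hP'
  obtain ⟨⟨⟨A, hA⟩, ⟨a, ha⟩⟩, hLz⟩ := hsurj ⟨P', mem_degreeLT.mpr hP'⟩
  refine ⟨(A, a), ⟨mem_degreeLT.mp hA, mem_degreeLT.mp ha, ?_⟩, ?_⟩
  · have := congrArg (Subtype.val) hLz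
    simpa [hL, LinearMap.codRestrict_apply, Lraw_apply] using this.symm
  · rintro ⟨B, b⟩ ⟨hB, hb, heq⟩
    have hLw : L (⟨B, mem_degreeLT.mpr hB⟩, ⟨b, mem_degreeLT.mpr hb⟩)
        = L (⟨A, hA⟩, ⟨a, ha⟩) := by
      apply Subtype.ext
      have h1 := congrArg (Subtype.val) hLz
      simp only [hL, LinearMap.codRestrict_apply, LinearMap.comp_apply,
        LinearMap.prodMap_apply, Submodule.coe_subtype, Lraw_apply] at h1 ⊢
      rw [h1, ← heq]
    have := hinj hLw
    have h1 := congrArg (fun z => (z.1 : K[X])) this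
    have h2 := congrArg (fun z => (z.2 : K[X])) this
    simp only at h1 h2
    ext <;> simp [h1, h2]

end Aux

section Transfer

variable {k : Type*} [Field k]

local notation "R" => Polynomial k
local notation "Kk" => RatFunc k

lemma exists_primitive (p : Polynomial Kk) (hp : p ≠ 0) :
    ∃ (r : Polynomial R) (c : Kk), r.IsPrimitive ∧ c ≠ 0 ∧
      Polynomial.map (algebraMap R Kk) r = C c * p := by
  classical
  set n := IsLocalization.integerNormalization (nonZeroDivisors R) p with hn
  obtain ⟨b, hb⟩ := IsLocalization.integerNormalization_map_to_map (nonZeroDivisors R) p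
  have hn0 : n ≠ 0 := fun h => hp (IsFractionRing.integerNormalization_eq_zero_iff.mp h)
  have hcont0 : (algebraMap R Kk) n.content ≠ 0 := by
    rw [Ne, map_eq_zero_iff _ (IsFractionRing.injective R Kk), content_eq_zero_iff]
    exact hn0
  have hb0 : (algebraMap R Kk) (b : R) ≠ 0 := by
    rw [Ne, map_eq_zero_iff _ (IsFractionRing.injective R Kk)]
    exact nonZeroDivisors.coe_ne_zero b
  refine ⟨n.primPart, (algebraMap R Kk) (b : R) / (algebraMap R Kk) n.content,
    n.isPrimitive_primPart, div_ne_zero hb0 hcont0, ?_⟩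
  apply mul_left_cancel₀ (show (C ((algebraMap R Kk) n.content) : Polynomial Kk) ≠ 0 by
    rwa [Ne, C_eq_zero])
  have h1 : Polynomial.map (algebraMap R Kk) n
      = C ((algebraMap R Kk) n.content) * Polynomial.map (algebraMap R Kk) n.primPart := by
    conv_lhs => rw [n.eq_C_content_mul_primPart]
    rw [Polynomial.map_mul, map_C]
  rw [← h1, hb, Algebra.smul_def, Polynomial.algebraMap_apply]
  rw [← mul_assoc, ← C_mul, mul_div_cancel₀ _ hcont0]

lemma sq_transfer (B : Polynomial R) (hBp : B.IsPrimitive) (hBsq : Squarefree B)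
    (p : Polynomial Kk) (hp : Prime p) : ¬ (p * p ∣ Polynomial.map (algebraMap R Kk) B) := by
  classical
  intro hdvd
  obtain ⟨r, c, hr, hc, hrc⟩ := exists_primitive p hp.ne_zero
  have hCc : IsUnit (C (c * c) : Polynomial Kk) := isUnit_C.mpr (isUnit_iff_ne_zero.mpr (mul_ne_zero hc hc))
  have h1 : Polynomial.map (algebraMap R Kk) (r * r) ∣ Polynomial.map (algebraMap R Kk) B := by
    rw [Polynomial.map_mul, hrc]
    have : C c * p * (C c * p) = C (c * c) * (p * p) := by rw [C_mul]; ring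
    rw [this]
    exact hCc.mul_left_dvd.mpr hdvd
  have h2 : r * r ∣ B := (hr.mul hr).dvd_of_fraction_map_dvd_fraction_map h1
  have h3 : IsUnit r := hBsq r h2
  have h4 : IsUnit (Polynomial.map (algebraMap R Kk) r) := hr.isUnit_iff_isUnit_map.mp h3
  rw [hrc] at h4
  exact hp.not_unit (isUnit_of_mul_isUnit_right h4)

lemma cop_transfer (B D : Polynomial R) (hBp : B.IsPrimitive) (hDp : D.IsPrimitive)
    (hcop : IsRelPrime B D) (p : Polynomial Kk) (hp : Prime p)
    (h1 : p ∣ Polynomial.map (algebraMap R Kk) B) (h2 : p ∣ Polynomial.map (algebraMap R Kk) D) :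
    False := by
  classical
  obtain ⟨r, c, hr, hc, hrc⟩ := exists_primitive p hp.ne_zero
  have hCc : IsUnit (C c : Polynomial Kk) := isUnit_C.mpr (isUnit_iff_ne_zero.mpr hc)
  have hd1 : r ∣ B := hr.dvd_of_fraction_map_dvd_fraction_map (hrc ▸ hCc.mul_left_dvd.mpr h1)
  have hd2 : r ∣ D := hr.dvd_of_fraction_map_dvd_fraction_map (hrc ▸ hCc.mul_left_dvd.mpr h2)
  have h3 : IsUnit r := hcop hd1 hd2
  have h4 : IsUnit (Polynomial.map (algebraMap R Kk) r) := hr.isUnit_iff_isUnit_map.mp h3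
  rw [hrc] at h4
  exact hp.not_unit (isUnit_of_mul_isUnit_right h4)

lemma prod_pow_dvd {A : Type*} [CommRing A] (f : ℕ → Polynomial A) (mm : ℕ) :
    (∏ i ∈ Finset.range mm, f i ^ i) ∣
      (∏ i ∈ Finset.range mm, f i) * derivative (∏ i ∈ Finset.range mm, f i ^ i) := by
  induction mm with
  | zero => simp
  | succ n ih =>
    obtain ⟨w, hw⟩ := ih
    rw [Finset.prod_range_succ, Finset.prod_range_succ, derivative_mul, derivative_pow]
    rcases Nat.eq_zero_or_pos n with rfl | hn
    · refine ⟨f 0 * w, ?_⟩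
      simp only [pow_zero, Nat.cast_zero, map_zero, zero_mul, mul_zero, add_zero, mul_one]
      linear_combination (f 0) * hw
    · obtain ⟨n', rfl⟩ : ∃ n', n = n' + 1 := ⟨n - 1, by omega⟩
      simp only [Nat.add_sub_cancel]
      refine ⟨w * f (n' + 1) + (∏ i ∈ Finset.range (n' + 1), f i) * C ((n' + 1 : ℕ) : A)
        * derivative (f (n' + 1)), ?_⟩
      linear_combination (f (n' + 1) ^ (n' + 2)) * hw

end Transfer

/-- Lemma `le:HOsystem`, in its equivalent decomposition form. Under
Hypothesis (H), for every `P'` in `k(x)[y]` with `deg_y(P') < d_y` there is a unique pair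
`(A, a)` of polynomials in `k(x)[y]` with `deg_y(A) < d_y⁻` and `deg_y(a) < d_y*` such that
`P'/Q = D_y(A/Q⁻) + a/Q*`. -/
theorem stmt_2 {k : Type*} [Field k] [CharZero k]
    (P Q : Polynomial (Polynomial k))
    (hP : P ≠ 0) (hQ : Q ≠ 0)
    (hPQdeg : P.degree < Q.degree)
    (hPQcop : IsRelPrime P Q)
    (hQprimY : Q.IsPrimitive)
    (m : ℕ) (hm : 0 < m) (q : Polynomial k) (Qi : ℕ → Polynomial (Polynomial k))
    (hfac : Q = Polynomial.C q * ∏ i ∈ Finset.range m, Qi i ^ (i + 1))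
    (hQiprim : ∀ i < m, (Qi i).IsPrimitive)
    (hQisqf : ∀ i < m, Squarefree (Qi i))
    (hQicop : ∀ i < m, ∀ j < m, i ≠ j → IsRelPrime (Qi i) (Qi j))
    (hQim : 0 < (Qi (m - 1)).natDegree)
    (Qs Qneg : Polynomial (Polynomial k))
    (hQs : Qs = ∏ i ∈ Finset.range m, Qi i)
    (hQneg : Q = Qs * Qneg)
    (Dy : RatFunc (RatFunc k) → RatFunc (RatFunc k)) (hDy : IsDeriv Dy)
    (hDyval : ∀ A : Polynomial (RatFunc k), Dy (kyToF A) = kyToF (Polynomial.derivative A)) :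
    ∀ P' : Polynomial (RatFunc k), P'.degree < (Q.natDegree : WithBot ℕ) →
      ∃! Aa : Polynomial (RatFunc k) × Polynomial (RatFunc k),
        Aa.1.degree < (Qneg.natDegree : WithBot ℕ) ∧
        Aa.2.degree < (Qs.natDegree : WithBot ℕ) ∧
        kyToF P' / toF Q = Dy (kyToF Aa.1 / toF Qneg) + kyToF Aa.2 / toF Qs := by
  classical
  haveI : CharZero (Polynomial k) := charZero_of_injective_algebraMap (Polynomial.C_injective)
  haveI : CharZero (RatFunc k) := IsFractionRing.charZero_of_isFractionRing (Polynomial k) (K := RatFunc k)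
  intro P' hP'
  set Kk := RatFunc k with hKk
  have hinj : Function.Injective (algebraMap (Polynomial k) Kk) := IsFractionRing.injective _ _
  have htoKy_inj : Function.Injective (toKy (k := k)) := Polynomial.map_injective _ hinj
  set S : Polynomial Kk := toKy Qs with hSdef
  set N : Polynomial Kk := toKy Qneg with hNdef
  have hQs0 : Qs ≠ 0 := fun h => hQ (by rw [hQneg, h, zero_mul])
  have hQn0 : Qneg ≠ 0 := fun h => hQ (by rw [hQneg, h, mul_zero])
  have hS0 : S ≠ 0 := fun h => hQs0 (htoKy_inj (by simpa using h))
  have hN0 : N ≠ 0 := fun h => hQn0 (htoKy_inj (by simpa using h))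
  have hq0 : q ≠ 0 := by
    rintro rfl
    rw [map_zero, zero_mul] at hfac
    exact hQ hfac
  -- factorization of Qneg
  have hQnegfac : Qneg = Polynomial.C q * ∏ i ∈ Finset.range m, Qi i ^ i := by
    apply mul_left_cancel₀ hQs0
    have hps : ∏ i ∈ Finset.range m, Qi i ^ (i + 1)
        = (∏ i ∈ Finset.range m, Qi i) * ∏ i ∈ Finset.range m, Qi i ^ i := by
      rw [← Finset.prod_mul_distrib]
      exact Finset.prod_congr rfl fun i _ => pow_succ' (Qi i) i
    rw [← hQneg, hfac, hQs, hps]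
    ring
  -- notation for images
  set qb : Kk := algebraMap (Polynomial k) Kk q with hqb
  have hqb0 : qb ≠ 0 := fun h => hq0 (hinj (by rw [hqb] at h; rw [h, map_zero]))
  have hCqb : IsUnit (Polynomial.C qb) := Polynomial.isUnit_C.mpr (isUnit_iff_ne_zero.mpr hqb0)
  set B : Polynomial Kk := ∏ i ∈ Finset.range m, (toKy (Qi i)) ^ i with hB
  have hNfac : N = Polynomial.C qb * B := by
    rw [hNdef, hQnegfac, map_mul, map_prod]
    have hc : toKy (Polynomial.C q) = Polynomial.C qb := Polynomial.map_C _
    rw [hc, hB]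
    congr 1
    exact Finset.prod_congr rfl fun i _ => map_pow _ _ _
  have hSfac : S = ∏ i ∈ Finset.range m, toKy (Qi i) := by
    rw [hSdef, hQs, map_prod]
  -- E and the relation E * N = S * N'
  obtain ⟨E, hEB⟩ : B ∣ S * Polynomial.derivative B := by
    rw [hSfac, hB]
    exact prod_pow_dvd _ m
  have hEN : E * N = S * Polynomial.derivative N := by
    rw [hNfac, Polynomial.derivative_mul, Polynomial.derivative_C, zero_mul, zero_add]
    calc E * (Polynomial.C qb * B) = Polynomial.C qb * (B * E) := by ring
      _ = Polynomial.C qb * (S * Polynomial.derivative B) := by rw [← hEB]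
      _ = S * (Polynomial.C qb * Polynomial.derivative B) := by ring
  -- divisibility transfer facts
  have hdvd : ∀ p : Polynomial Kk, Prime p → p ∣ N → p ∣ S := by
    intro p hp hpN
    have h1 : p ∣ B := hpN.trans (by rw [hNfac]; exact hCqb.mul_left_dvd.mpr dvd_rfl)
    obtain ⟨i, hi, hdi⟩ := hp.exists_mem_finset_dvd (hB ▸ h1)
    have h2 : p ∣ toKy (Qi i) := hp.dvd_of_dvd_pow hdi
    exact h2.trans (hSfac ▸ Finset.dvd_prod_of_mem _ hi)
  have hsq : ∀ p : Polynomial Kk, Prime p → ¬ (p * p ∣ S) := by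
    intro p hp hdd
    have hpS : p ∣ S := (dvd_mul_right p p).trans hdd
    obtain ⟨i, hi, hdi⟩ := hp.exists_mem_finset_dvd (hSfac ▸ hpS)
    have him : i < m := Finset.mem_range.mp hi
    have hT : ¬ p ∣ ∏ j ∈ (Finset.range m).erase i, toKy (Qi j) := by
      intro h
      obtain ⟨j, hj, hdj⟩ := hp.exists_mem_finset_dvd h
      have hjm : j < m := Finset.mem_range.mp (Finset.mem_of_mem_erase hj)
      have hij : i ≠ j := fun h => (Finset.ne_of_mem_erase hj) h.symm
      exact cop_transfer (Qi i) (Qi j) (hQiprim i him) (hQiprim j hjm)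
        (hQicop i him j hjm hij) p hp hdi hdj
    obtain ⟨W, hW⟩ := hdi
    have hSsplit : S = p * (W * ∏ j ∈ (Finset.range m).erase i, toKy (Qi j)) := by
      rw [hSfac, ← Finset.mul_prod_erase _ _ hi, hW]
      ring
    have h5 : p ∣ W * ∏ j ∈ (Finset.range m).erase i, toKy (Qi j) := by
      have h6 : p * p ∣ p * (W * ∏ j ∈ (Finset.range m).erase i, toKy (Qi j)) := hSsplit ▸ hdd
      exact (mul_dvd_mul_iff_left hp.ne_zero).mp h6
    rcases hp.dvd_mul.mp h5 with h7 | h7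
    · obtain ⟨V, hV⟩ := h7
      exact sq_transfer (Qi i) (hQiprim i him) (hQisqf i him) p hp
        ⟨V, show Polynomial.map (algebraMap (Polynomial k) (RatFunc k)) (Qi i) = p * p * V by
          show toKy (Qi i) = p * p * V
          rw [hW, hV]; ring⟩
    · exact hT h7
  -- degrees
  have hdegN : N.natDegree = Qneg.natDegree := natDegree_map_eq_of_injective hinj _
  have hdegS : S.natDegree = Qs.natDegree := natDegree_map_eq_of_injective hinj _
  have hdegQ : Q.natDegree = N.natDegree + S.natDegree := by
    rw [hQneg, natDegree_mul hQs0 hQn0, hdegN, hdegS, Nat.add_comm]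
  -- apply the decomposition lemma
  have hP'' : P'.degree < ((N.natDegree + S.natDegree : ℕ) : WithBot ℕ) := by
    rw [← hdegQ]; exact hP'
  obtain ⟨⟨A, a⟩, ⟨h1, h2, h3⟩, huniq⟩ := decomp S N E hS0 hN0 hEN hdvd hsq P' hP''
  -- the equivalence between the field equation and the polynomial equation
  have hφinj : Function.Injective (kyToF (k := k)) := RatFunc.algebraMap_injective Kk
  have hφS : kyToF S ≠ 0 := RatFunc.algebraMap_ne_zero hS0
  have hφN : kyToF N ≠ 0 := RatFunc.algebraMap_ne_zero hN0
  have hφSN : kyToF (S * N) ≠ 0 := RatFunc.algebraMap_ne_zero (mul_ne_zero hS0 hN0)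
  have htoFQ : toF Q = kyToF (S * N) := by
    show kyToF (toKy Q) = kyToF (S * N)
    rw [hQneg, map_mul]
  have htoFQn : toF Qneg = kyToF N := rfl
  have htoFQs : toF Qs = kyToF S := rfl
  have hquot : ∀ u v : Polynomial Kk, v ≠ 0 →
      Dy (kyToF u / kyToF v) * (kyToF v) ^ 2
        = kyToF (Polynomial.derivative u) * kyToF v - kyToF u * kyToF (Polynomial.derivative v) := by
    intro u v hv
    have hv' : kyToF v ≠ 0 := RatFunc.algebraMap_ne_zero hv
    have h1 : kyToF u / kyToF v * kyToF v = kyToF u := div_mul_cancel₀ _ hv'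
    have h2 := hDy.2 (kyToF u / kyToF v) (kyToF v)
    rw [h1, hDyval, hDyval] at h2
    field_simp at h2
    linear_combination -h2
  have hENf : kyToF E * kyToF N = kyToF S * kyToF (Polynomial.derivative N) := by
    rw [← map_mul, ← map_mul, hEN]
  have hiff : ∀ A a : Polynomial Kk,
      (kyToF P' / toF Q = Dy (kyToF A / toF Qneg) + kyToF a / toF Qs
        ↔ P' = S * Polynomial.derivative A - E * A + N * a) := by
    intro A a
    have hDform : Dy (kyToF A / kyToF N)
        = (kyToF (Polynomial.derivative A) * kyToF N - kyToF A * kyToF (Polynomial.derivative N))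
            / (kyToF N) ^ 2 := by
      rw [eq_div_iff (pow_ne_zero 2 hφN)]
      exact hquot A N hN0
    have hrhs : Dy (kyToF A / kyToF N) + kyToF a / kyToF S
        = kyToF (S * Polynomial.derivative A - E * A + N * a) / kyToF (S * N) := by
      rw [hDform]
      rw [div_add_div _ _ (pow_ne_zero 2 hφN) hφS, div_eq_div_iff (mul_ne_zero (pow_ne_zero 2 hφN) hφS) hφSN]
      simp only [map_mul, map_sub, map_add]
      linear_combination (kyToF S * kyToF N * kyToF A) * hENf
    rw [htoFQ, htoFQn, htoFQs, hrhs, div_eq_div_iff hφSN hφSN]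
    constructor
    · intro h
      exact hφinj (mul_right_cancel₀ hφSN h)
    · intro h
      rw [h]
  refine ⟨(A, a), ⟨by rw [← hdegN]; exact h1, by rw [← hdegS]; exact h2, (hiff A a).mpr h3⟩, ?_⟩
  rintro ⟨A', a'⟩ ⟨hA', ha', heq'⟩
  exact huniq (A', a') ⟨by rw [hdegN]; exact hA', by rw [hdegS]; exact ha', (hiff A' a').mp heq'⟩
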